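/- If a linear order L is order-isomorphic to the linguage of a deterministic finite automaton over {0,1}, then so is L·ω* := Σ_{n ∈ ω*} L, the reverse-ω-indexed sum of copies of L (i.e. countably many copies of L arranged in the order type of the negative integers). -/

import Mathlib

/-- A deterministic finite automaton with a partial transition function. -/
structure PDFA (σ : Type) where
  /-- the (finite) set of states -/
  State : Type
  finState : Finite State
  /-- the start state -/
  start : State
  /-- the set of accept states -/
  accept : Set State
  /-- the partial transition function -/
  step : State → σ → Option State

namespace PDFA

variable {σ : Type} (M : PDFA σ)

/-- The extended (partial) transition function `δ̂`, reading the word left to right. -/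
def run (q : M.State) (w : List σ) : Option M.State :=
  w.foldlM (fun q a => M.step q a) q

/-- The language accepted by the automaton. -/
def lang : Set (List σ) := {w | ∃ q ∈ M.accept, M.run M.start w = some q}

end PDFA

/-- The inorder relation `<₂` on finite binary words: `x <₂ y` iff, writing
`x = w·x'`, `y = w·y'` with `w` the longest common prefix, either `x'` begins
with `0`(=`false`) or `y'` begins with `1`(=`true`). -/
def inlt : List Bool → List Bool → Prop
  | [], [] => False
  | [], b :: _ => b = true
  | a :: _, [] => a = false
  | a :: x, b :: y => (a = false ∧ b = true) ∨ (a = b ∧ inlt x y)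

/-- `(L, r)` is order-isomorphic to the linguage `(L(M), <₂)` of some
deterministic finite automaton `M` over `{0,1}`. -/
def IsLinguageOf (L : Type) (r : L → L → Prop) : Prop :=
  ∃ M : PDFA Bool, Nonempty (r ≃r fun x y : M.lang => inlt x.1 y.1)

-- auxiliary
def PDFA.star (M : PDFA Bool) : PDFA Bool where
  State := Option M.State
  finState := by haveI := M.finState; exact Finite.of_equiv _ (Equiv.optionEquivSumPUnit.{0,0} _).symm
  start := none
  accept := some '' M.accept
  step := fun s b => match s with
    | none => if b then some (some M.start) else some none
    | some q => (M.step q b).map some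

attribute [reducible] PDFA.star

lemma run_cons {σ : Type} (M : PDFA σ) (q : M.State) (a : σ) (w : List σ) :
    M.run q (a :: w) = (M.step q a) >>= fun q' => M.run q' w := by
  simp [PDFA.run, List.foldlM]

lemma star_run_some (M : PDFA Bool) (q : M.State) (w : List Bool) :
    (M.star).run (some q) w = (M.run q w).map some := by
  induction w generalizing q with
  | nil => simp [PDFA.run]
  | cons a w ih =>
    rw [run_cons, run_cons]
    show ((M.step q a).map some >>= _) = _
    cases h : M.step q a with
    | none => simp
    | some q' => simp [ih]

lemma star_run_prefix (M : PDFA Bool) (n : ℕ) (w : List Bool) :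
    (M.star).run none (List.replicate n false ++ true :: w)
      = (M.run M.start w).map some := by
  induction n with
  | zero =>
    simp only [List.replicate, List.nil_append]
    rw [run_cons]
    show ((if true then some (some M.start) else some none) >>= _) = _
    simp [star_run_some]
  | succ n ih =>
    rw [List.replicate_succ, List.cons_append, run_cons]
    show ((if false then some (some M.start) else some none) >>= _) = _
    simpa using ih

lemma star_lang (M : PDFA Bool) (x : List Bool) :
    x ∈ (M.star).lang ↔ ∃ n w, x = List.replicate n false ++ true :: w ∧ w ∈ M.lang := by
  constructor
  · rintro ⟨q, hq, hr⟩
    rw [show (M.star).start = none from rfl] at hr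
    obtain ⟨q', hq', rfl⟩ := hq
    induction x with
    | nil =>
      exfalso
      simp [PDFA.run] at hr
    | cons a x ih =>
      cases a with
      | false =>
        rw [run_cons] at hr
        have hr' : (M.star).run none x = some (some q') := by
          simpa [PDFA.star] using hr
        obtain ⟨n, w, rfl, hw⟩ := ih hr'
        exact ⟨n + 1, w, by simp [List.replicate_succ], hw⟩
      | true =>
        rw [run_cons] at hr
        have hr' : (M.star).run (some M.start) x = some (some q') := by
          simpa [PDFA.star] using hr
        rw [star_run_some] at hr'
        refine ⟨0, x, by simp, q', hq', ?_⟩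
        simpa using hr'
  · rintro ⟨n, w, rfl, q, hq, hr⟩
    exact ⟨some q, ⟨q, hq, rfl⟩, by rw [show (M.star).start = none from rfl, star_run_prefix, hr]; rfl⟩

lemma inlt_blocks (m n : ℕ) (v w : List Bool) :
    inlt (List.replicate m false ++ true :: v) (List.replicate n false ++ true :: w)
      ↔ n < m ∨ (m = n ∧ inlt v w) := by
  induction m generalizing n with
  | zero =>
    cases n with
    | zero => simp [inlt]
    | succ n => simp [inlt, List.replicate_succ]
  | succ m ih =>
    cases n with
    | zero =>
      simp only [List.replicate_succ, List.cons_append, List.nil_append]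
      show inlt (false :: _) (true :: _) ↔ _
      simp [inlt]
    | succ n =>
      simp only [List.replicate_succ, List.cons_append]
      show (false = false ∧ false = true) ∨ (false = false ∧ _) ↔ _
      rw [ih]
      constructor
      · rintro (⟨_, h⟩ | ⟨_, (h | ⟨rfl, h⟩)⟩)
        · exact absurd h (by simp)
        · exact Or.inl (by omega)
        · exact Or.inr ⟨rfl, h⟩
      · rintro (h | ⟨h, h2⟩)
        · exact Or.inr ⟨rfl, Or.inl (by omega)⟩
        · exact Or.inr ⟨rfl, Or.inr ⟨by omega, h2⟩⟩

lemma blocks_inj {m n : ℕ} {v w : List Bool}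
    (h : List.replicate m false ++ true :: v = List.replicate n false ++ true :: w) :
    m = n ∧ v = w := by
  induction m generalizing n with
  | zero =>
    cases n with
    | zero => simpa using h
    | succ n => simp [List.replicate_succ] at h
  | succ m ih =>
    cases n with
    | zero => simp [List.replicate_succ] at h
    | succ n =>
      simp only [List.replicate_succ, List.cons_append, List.cons.injEq] at h
      obtain ⟨m_eq, rfl⟩ := ih h.2
      exact ⟨by omega, rfl⟩

/-- If `L` is order-isomorphic to the linguage of a DFA over `{0,1}`,
then so is `L·ω* = Σ_{n ∈ ω*} L`, the reverse-`ω`-indexed sum of copies of `L`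
(pairs `(n, a)` ordered by the natural number index `n` first, with the reverse order
on the indices). -/
theorem isLinguage_omegaStarMul (L : Type) (r : L → L → Prop) (h : IsLinguageOf L r) :
    IsLinguageOf (ℕ × L) (Prod.Lex (fun m n : ℕ => n < m) r) := by
  obtain ⟨M, ⟨e⟩⟩ := h
  refine ⟨M.star, ⟨?_⟩⟩
  have mem : ∀ p : ℕ × L,
      (List.replicate p.1 false ++ true :: (e p.2).1) ∈ (M.star).lang := fun p =>
    (star_lang M _).mpr ⟨p.1, (e p.2).1, rfl, (e p.2).2⟩
  let f : ℕ × L → (M.star).lang := fun p => ⟨_, mem p⟩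
  have hbij : Function.Bijective f := by
    constructor
    · rintro ⟨m, a⟩ ⟨n, b⟩ hab
      have := Subtype.ext_iff.mp hab
      obtain ⟨h1, h2⟩ := blocks_inj this
      have : e a = e b := Subtype.ext h2
      exact Prod.ext h1 (e.injective this)
    · rintro ⟨x, hx⟩
      obtain ⟨n, w, rfl, hw⟩ := (star_lang M x).mp hx
      obtain ⟨a, ha⟩ := e.surjective ⟨w, hw⟩
      exact ⟨(n, a), by simp only [f, ha]⟩
  refine ⟨Equiv.ofBijective f hbij, ?_⟩
  rintro ⟨m, a⟩ ⟨n, b⟩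
  simp only [Equiv.ofBijective_apply, f]
  rw [inlt_blocks, Prod.lex_def]
  have : inlt (e a).1 (e b).1 ↔ r a b := e.map_rel_iff
  rw [this]
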